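/- Fix nonzero integers h, k with h + k ≠ 0, set c = h + k and d = h − k, and for u ∈ [0,1] let z_u(t) = u·exp(iπct/2) + √(1−u²)·exp(−iπct/2) and w_u(t) = exp(iπdt/2). Then the curve γ_u(t) = (2/π)·( (u√(1−u²)/(h+k))·sin((h+k)πt), −(u/k)·cos(kπt) + (√(1−u²)/h)·cos(hπt), (u/k)·sin(kπt) + (√(1−u²)/h)·sin(hπt) ) satisfies γ_u′(t) = ( |z_u(t)|² − |w_u(t)|², 2·Im(z_u(t)·conj(w_u(t))), 2·Re(z_u(t)·conj(w_u(t))) ) for all t; that is, γ_u is, up to translation, the base curve of the frame-Hopf framed curve of (z_u, w_u). -/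

import Mathlib

open scoped ComplexConjugate

noncomputable section

/-- The explicit curve `γ_u` of the one-parameter family of critical framed curves,
for parameters `h, k` and `u ∈ [0,1]`. -/
def gammaU (h k : ℤ) (u : ℝ) (t : ℝ) : EuclideanSpace ℝ (Fin 3) :=
  WithLp.toLp 2 ![(2 / Real.pi) * (u * Real.sqrt (1 - u ^ 2) / ((h : ℝ) + (k : ℝ)) *
      Real.sin (((h : ℝ) + (k : ℝ)) * Real.pi * t)),
    (2 / Real.pi) * (-(u / (k : ℝ)) * Real.cos ((k : ℝ) * Real.pi * t) +
      Real.sqrt (1 - u ^ 2) / (h : ℝ) * Real.cos ((h : ℝ) * Real.pi * t)),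
    (2 / Real.pi) * ((u / (k : ℝ)) * Real.sin ((k : ℝ) * Real.pi * t) +
    Real.sqrt (1 - u ^ 2) / (h : ℝ) * Real.sin ((h : ℝ) * Real.pi * t))]

lemma hasDerivAt_sinlin (a t : ℝ) :
    HasDerivAt (fun t : ℝ => Real.sin (a * t)) (a * Real.cos (a * t)) t := by
  have h1 : HasDerivAt (fun t : ℝ => a * t) a t := by
    simpa using (hasDerivAt_id t).const_mul a
  simpa [mul_comm, Function.comp_def] using (Real.hasDerivAt_sin (a * t)).comp t h1

lemma hasDerivAt_coslin (a t : ℝ) :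
    HasDerivAt (fun t : ℝ => Real.cos (a * t)) (-(a * Real.sin (a * t))) t := by
  have h1 : HasDerivAt (fun t : ℝ => a * t) a t := by
    simpa using (hasDerivAt_id t).const_mul a
  simpa [mul_comm, Function.comp_def] using (Real.hasDerivAt_cos (a * t)).comp t h1

/-- With `c = h + k`, `d = h − k`, `z_u(t) = u·exp(iπct/2) + √(1−u²)·exp(−iπct/2)` and
`w_u(t) = exp(iπdt/2)`, the explicit curve `γ_u` satisfies
`γ_u'(t) = (|z_u|² − |w_u|², 2·Im(z_u·conj w_u), 2·Re(z_u·conj w_u))`; that is, `γ_u`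
is, up to translation, the base curve of the frame-Hopf framed curve of `(z_u, w_u)`. -/
theorem gammaU_is_base_curve
    (h k : ℤ) (hh : h ≠ 0) (hk : k ≠ 0) (hhk : h + k ≠ 0)
    (u : ℝ) (hu : u ∈ Set.Icc (0 : ℝ) 1)
    (zu wu : ℝ → ℂ)
    (hzu : zu = fun t : ℝ => (u : ℂ) *
        Complex.exp (Complex.I * Real.pi * ((h : ℂ) + (k : ℂ)) * t / 2) +
      (Real.sqrt (1 - u ^ 2) : ℂ) *
        Complex.exp (-(Complex.I * Real.pi * ((h : ℂ) + (k : ℂ)) * t / 2)))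
    (hwu : wu = fun t : ℝ =>
      Complex.exp (Complex.I * Real.pi * ((h : ℂ) - (k : ℂ)) * t / 2)) :
    ∀ t : ℝ, HasDerivAt (gammaU h k u)
      (WithLp.toLp 2 ![‖zu t‖ ^ 2 - ‖wu t‖ ^ 2,
         2 * (zu t * conj (wu t)).im,
         2 * (zu t * conj (wu t)).re]) t := by
  intro t
  obtain ⟨hu0, hu1⟩ := hu
  set v : ℝ := Real.sqrt (1 - u ^ 2) with hvdef
  have hv2 : v ^ 2 = 1 - u ^ 2 := Real.sq_sqrt (by nlinarith)
  have hhR : (h : ℝ) ≠ 0 := Int.cast_ne_zero.mpr hh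
  have hkR : (k : ℝ) ≠ 0 := Int.cast_ne_zero.mpr hk
  have hcR : (h : ℝ) + (k : ℝ) ≠ 0 := by
    have : ((h + k : ℤ) : ℝ) ≠ 0 := Int.cast_ne_zero.mpr hhk
    push_cast at this; exact this
  have hpi : Real.pi ≠ 0 := Real.pi_ne_zero
  set θ : ℝ := Real.pi * ((h : ℝ) + k) * t / 2 with hθ
  set φ : ℝ := Real.pi * ((h : ℝ) - k) * t / 2 with hφ
  have e1 : Complex.I * Real.pi * ((h : ℂ) + (k : ℂ)) * t / 2 = (θ : ℂ) * Complex.I := by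
    rw [hθ]; push_cast; ring
  have e2 : Complex.I * Real.pi * ((h : ℂ) - (k : ℂ)) * t / 2 = (φ : ℂ) * Complex.I := by
    rw [hφ]; push_cast; ring
  have hzt : zu t = (u : ℂ) * Complex.exp ((θ : ℂ) * Complex.I) +
      (v : ℂ) * Complex.exp (((-θ : ℝ) : ℂ) * Complex.I) := by
    rw [hzu]; simp only; rw [e1]; push_cast; ring_nf
  have hwt : conj (wu t) = Complex.exp (((-φ : ℝ) : ℂ) * Complex.I) := by
    rw [hwu]; simp only
    rw [e2, ← Complex.exp_conj, map_mul, Complex.conj_ofReal, Complex.conj_I]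
    push_cast; ring_nf
  have hwabs : ‖wu t‖ = 1 := by
    rw [hwu]; simp only [e2, Complex.norm_exp]
    simp
  have hk' : (k : ℝ) * Real.pi * t = θ - φ := by rw [hθ, hφ]; ring
  have hh' : (h : ℝ) * Real.pi * t = θ + φ := by rw [hθ, hφ]; ring
  have hc' : ((h : ℝ) + (k : ℝ)) * Real.pi * t = 2 * θ := by rw [hθ]; ring
  -- the three component identities
  have hA : ‖zu t‖ ^ 2 - ‖wu t‖ ^ 2
      = 2 * u * v * Real.cos (((h : ℝ) + (k : ℝ)) * Real.pi * t) := by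
    rw [hwabs, hzt, hc', Real.cos_two_mul, Complex.sq_norm, Complex.normSq_apply]
    simp only [Complex.add_re, Complex.add_im, Complex.mul_re, Complex.mul_im,
      Complex.ofReal_re, Complex.ofReal_im,
      Complex.exp_ofReal_mul_I_re, Complex.exp_ofReal_mul_I_im,
      Real.cos_neg, Real.sin_neg]
    linear_combination (u - v) ^ 2 * Real.sin_sq_add_cos_sq θ + hv2
  have hB : (zu t * conj (wu t)).im
      = u * Real.sin ((k : ℝ) * Real.pi * t) - v * Real.sin ((h : ℝ) * Real.pi * t) := by
    rw [hzt, hwt, hk', hh', Real.sin_sub, Real.sin_add]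
    simp only [Complex.mul_re, Complex.mul_im, Complex.add_re, Complex.add_im,
      Complex.ofReal_re, Complex.ofReal_im,
      Complex.exp_ofReal_mul_I_re, Complex.exp_ofReal_mul_I_im,
      Real.cos_neg, Real.sin_neg]
    ring
  have hC : (zu t * conj (wu t)).re
      = u * Real.cos ((k : ℝ) * Real.pi * t) + v * Real.cos ((h : ℝ) * Real.pi * t) := by
    rw [hzt, hwt, hk', hh', Real.cos_sub, Real.cos_add]
    simp only [Complex.mul_re, Complex.mul_im, Complex.add_re, Complex.add_im,
      Complex.ofReal_re, Complex.ofReal_im,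
      Complex.exp_ofReal_mul_I_re, Complex.exp_ofReal_mul_I_im,
      Real.cos_neg, Real.sin_neg]
    ring
  rw [hA, hB, hC]
  -- derivatives of the three components
  have d1 : HasDerivAt (fun t : ℝ => (2 / Real.pi) * (u * v / ((h : ℝ) + (k : ℝ)) *
        Real.sin (((h : ℝ) + (k : ℝ)) * Real.pi * t)))
      (2 * u * v * Real.cos (((h : ℝ) + (k : ℝ)) * Real.pi * t)) t := by
    have := ((hasDerivAt_sinlin (((h : ℝ) + (k : ℝ)) * Real.pi) t).const_mul
        (u * v / ((h : ℝ) + (k : ℝ)))).const_mul (2 / Real.pi)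
    refine this.congr_deriv ?_
    field_simp
  have d2 : HasDerivAt (fun t : ℝ => (2 / Real.pi) * (-(u / (k : ℝ)) *
        Real.cos ((k : ℝ) * Real.pi * t) +
        v / (h : ℝ) * Real.cos ((h : ℝ) * Real.pi * t)))
      (2 * (u * Real.sin ((k : ℝ) * Real.pi * t) -
        v * Real.sin ((h : ℝ) * Real.pi * t))) t := by
    have := (((hasDerivAt_coslin ((k : ℝ) * Real.pi) t).const_mul (-(u / (k : ℝ)))).add
        ((hasDerivAt_coslin ((h : ℝ) * Real.pi) t).const_mul (v / (h : ℝ)))).const_mul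
        (2 / Real.pi)
    refine this.congr_deriv ?_
    field_simp; ring
  have d3 : HasDerivAt (fun t : ℝ => (2 / Real.pi) * ((u / (k : ℝ)) *
        Real.sin ((k : ℝ) * Real.pi * t) +
        v / (h : ℝ) * Real.sin ((h : ℝ) * Real.pi * t)))
      (2 * (u * Real.cos ((k : ℝ) * Real.pi * t) +
        v * Real.cos ((h : ℝ) * Real.pi * t))) t := by
    have := (((hasDerivAt_sinlin ((k : ℝ) * Real.pi) t).const_mul (u / (k : ℝ))).add
        ((hasDerivAt_sinlin ((h : ℝ) * Real.pi) t).const_mul (v / (h : ℝ)))).const_mul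
        (2 / Real.pi)
    refine this.congr_deriv ?_
    field_simp
  have hPi : HasDerivAt (fun t : ℝ =>
      (![(2 / Real.pi) * (u * v / ((h : ℝ) + (k : ℝ)) *
          Real.sin (((h : ℝ) + (k : ℝ)) * Real.pi * t)),
        (2 / Real.pi) * (-(u / (k : ℝ)) * Real.cos ((k : ℝ) * Real.pi * t) +
          v / (h : ℝ) * Real.cos ((h : ℝ) * Real.pi * t)),
        (2 / Real.pi) * ((u / (k : ℝ)) * Real.sin ((k : ℝ) * Real.pi * t) +
          v / (h : ℝ) * Real.sin ((h : ℝ) * Real.pi * t))] : Fin 3 → ℝ))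
      (![2 * u * v * Real.cos (((h : ℝ) + (k : ℝ)) * Real.pi * t),
         2 * (u * Real.sin ((k : ℝ) * Real.pi * t) - v * Real.sin ((h : ℝ) * Real.pi * t)),
         2 * (u * Real.cos ((k : ℝ) * Real.pi * t) + v * Real.cos ((h : ℝ) * Real.pi * t))] : Fin 3 → ℝ) t := by
    rw [hasDerivAt_pi]
    intro i
    fin_cases i
    · simpa using d1
    · simpa using d2
    · simpa using d3
  exact ((EuclideanSpace.equiv (Fin 3) ℝ).symm.toContinuousLinearMap.hasFDerivAt).comp_hasDerivAt t hPi
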